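/- Let A be an integral domain which is not a field, with fraction field K, and R = A ⋉ K. If A is a Bézout domain, then R is a Bézout ring, i.e., every finitely generated ideal of R is principal. -/
import Mathlib

open TrivSqZeroExt

/-- If `A` is a Bézout domain (not a field) with fraction field `K`, then the trivial
extension `R = A ⋉ K` is a Bézout ring. -/
theorem trivSqZeroExt_isBezout (A : Type*) [CommRing A] [IsDomain A] (hA : ¬IsField A)
    (K : Type*) [Field K] [Algebra A K] [IsFractionRing A K]
    [Module Aᵐᵒᵖ K] [IsCentralScalar A K]
    (hB : IsBezout A) :
    IsBezout (TrivSqZeroExt A K) := by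
  haveI := hB
  have hinj : Function.Injective (algebraMap A K) := IsFractionRing.injective A K
  rw [IsBezout.iff_span_pair_isPrincipal]
  intro x y
  by_cases h : x.fst = 0 ∧ y.fst = 0
  · obtain ⟨ha, hb⟩ := h
    obtain ⟨⟨n₁, d₁⟩, h₁⟩ := IsLocalization.surj (nonZeroDivisors A) x.snd
    obtain ⟨⟨n₂, d₂⟩, h₂⟩ := IsLocalization.surj (nonZeroDivisors A) y.snd
    simp only at h₁ h₂
    obtain ⟨g, hgspan⟩ :=
      (IsBezout.span_pair_isPrincipal (n₁ * (d₂ : A)) (n₂ * (d₁ : A))).principal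
    obtain ⟨u, v, huv⟩ : ∃ u v, u * (n₁ * (d₂ : A)) + v * (n₂ * (d₁ : A)) = g :=
      Ideal.mem_span_pair.mp
        (show g ∈ Ideal.span {n₁ * (d₂ : A), n₂ * (d₁ : A)} by
          rw [hgspan]; exact Submodule.mem_span_singleton_self g)
    obtain ⟨p, hp⟩ : ∃ p, p * g = n₁ * (d₂ : A) :=
      Ideal.mem_span_singleton'.mp
        (show (n₁ * (d₂ : A)) ∈ Submodule.span A ({g} : Set A) by
          rw [← hgspan]; exact Ideal.subset_span (by simp))
    obtain ⟨q, hq⟩ : ∃ q, q * g = n₂ * (d₁ : A) :=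
      Ideal.mem_span_singleton'.mp
        (show (n₂ * (d₁ : A)) ∈ Submodule.span A ({g} : Set A) by
          rw [← hgspan]; exact Ideal.subset_span (by simp))
    set D : K := algebraMap A K ((d₁ : A) * (d₂ : A)) with hDdef
    have hD : D ≠ 0 :=
      IsFractionRing.to_map_ne_zero_of_mem_nonZeroDivisors (mul_mem d₁.2 d₂.2)
    set c : K := algebraMap A K g / D with hcdef
    have hc : c * D = algebraMap A K g := div_mul_cancel₀ _ hD
    have he : x.snd * D = algebraMap A K (n₁ * (d₂ : A)) := by
      rw [hDdef, map_mul, ← mul_assoc, h₁, map_mul]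
    have hf : y.snd * D = algebraMap A K (n₂ * (d₁ : A)) := by
      rw [hDdef, map_mul, mul_comm (algebraMap A K (d₁ : A)), ← mul_assoc, h₂, map_mul]
    refine ⟨⟨inr c, le_antisymm (Ideal.span_le.mpr ?_) (Ideal.span_le.mpr ?_)⟩⟩
    · rintro w hw
      simp only [Set.mem_insert_iff, Set.mem_singleton_iff] at hw
      rcases hw with rfl | rfl
      · have hpc : p • c = w.snd := by
          refine mul_right_cancel₀ hD ?_
          rw [Algebra.smul_def, mul_assoc, hc, ← map_mul, he, hp]
        refine Ideal.mem_span_singleton'.mpr ⟨inl p, ?_⟩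
        rw [inl_mul_inr]
        refine TrivSqZeroExt.ext ?_ ?_ <;> simp [ha, hpc]
      · have hqc : q • c = w.snd := by
          refine mul_right_cancel₀ hD ?_
          rw [Algebra.smul_def, mul_assoc, hc, ← map_mul, hf, hq]
        refine Ideal.mem_span_singleton'.mpr ⟨inl q, ?_⟩
        rw [inl_mul_inr]
        refine TrivSqZeroExt.ext ?_ ?_ <;> simp [hb, hqc]
    · rw [Set.singleton_subset_iff]
      have hcomb : algebraMap A K u * x.snd + algebraMap A K v * y.snd = c := by
        refine mul_right_cancel₀ hD ?_
        rw [add_mul, mul_assoc, mul_assoc, he, hf, hc,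
          ← map_mul, ← map_mul, ← map_add, huv]
      refine Ideal.mem_span_pair.mpr ⟨inl u, inl v, ?_⟩
      refine TrivSqZeroExt.ext ?_ ?_ <;>
        simp [ha, hb, hcomb, TrivSqZeroExt.snd_mul, TrivSqZeroExt.fst_mul, Algebra.smul_def]
  · obtain ⟨g, hgspan⟩ := (IsBezout.span_pair_isPrincipal x.fst y.fst).principal
    obtain ⟨u, v, huv⟩ : ∃ u v, u * x.fst + v * y.fst = g :=
      Ideal.mem_span_pair.mp
        (show g ∈ Ideal.span {x.fst, y.fst} by
          rw [hgspan]; exact Submodule.mem_span_singleton_self g)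
    obtain ⟨r, hr⟩ : ∃ r, r * g = x.fst :=
      Ideal.mem_span_singleton'.mp
        (show x.fst ∈ Submodule.span A ({g} : Set A) by
          rw [← hgspan]; exact Ideal.subset_span (by simp))
    obtain ⟨s, hs⟩ : ∃ s, s * g = y.fst :=
      Ideal.mem_span_singleton'.mp
        (show y.fst ∈ Submodule.span A ({g} : Set A) by
          rw [← hgspan]; exact Ideal.subset_span (by simp))
    have hg0 : g ≠ 0 := by
      intro hg0
      rw [hg0, mul_zero] at hr hs
      exact h ⟨hr.symm, hs.symm⟩
    have hgK : algebraMap A K g ≠ 0 := fun hc => hg0 (hinj (by simpa using hc))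
    refine ⟨⟨inl g, le_antisymm (Ideal.span_le.mpr ?_) (Ideal.span_le.mpr ?_)⟩⟩
    · rintro w hw
      simp only [Set.mem_insert_iff, Set.mem_singleton_iff] at hw
      rcases hw with rfl | rfl
      · refine Ideal.mem_span_singleton'.mpr ⟨inl r + inr (w.snd / algebraMap A K g), ?_⟩
        refine TrivSqZeroExt.ext ?_ ?_
        · simp [hr]
        · simp [TrivSqZeroExt.snd_mul, op_smul_eq_smul, Algebra.smul_def,
            mul_div_cancel₀ _ hgK, div_mul_cancel₀ _ hgK]
      · refine Ideal.mem_span_singleton'.mpr ⟨inl s + inr (w.snd / algebraMap A K g), ?_⟩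
        refine TrivSqZeroExt.ext ?_ ?_
        · simp [hs]
        · simp [TrivSqZeroExt.snd_mul, op_smul_eq_smul, Algebra.smul_def,
            mul_div_cancel₀ _ hgK, div_mul_cancel₀ _ hgK]
    · rw [Set.singleton_subset_iff, SetLike.mem_coe]
      set w : K := u • x.snd + v • y.snd with hwdef
      have hinrw : (inr w : TrivSqZeroExt A K) ∈ Ideal.span {x, y} := by
        rw [not_and_or] at h
        rcases h with hx0 | hy0
        · have hxK : algebraMap A K x.fst ≠ 0 := fun hc => hx0 (hinj (by simpa using hc))
          refine Ideal.mem_span_pair.mpr ⟨inr (w / algebraMap A K x.fst), 0, ?_⟩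
          refine TrivSqZeroExt.ext ?_ ?_ <;>
            simp [TrivSqZeroExt.snd_mul, TrivSqZeroExt.fst_mul, op_smul_eq_smul,
              Algebra.smul_def, mul_div_cancel₀ _ hxK, div_mul_cancel₀ _ hxK]
        · have hyK : algebraMap A K y.fst ≠ 0 := fun hc => hy0 (hinj (by simpa using hc))
          refine Ideal.mem_span_pair.mpr ⟨0, inr (w / algebraMap A K y.fst), ?_⟩
          refine TrivSqZeroExt.ext ?_ ?_ <;>
            simp [TrivSqZeroExt.snd_mul, TrivSqZeroExt.fst_mul, op_smul_eq_smul,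
              Algebra.smul_def, mul_div_cancel₀ _ hyK, div_mul_cancel₀ _ hyK]
      have hsum : inl u * x + inl v * y = inl g + inr w := by
        refine TrivSqZeroExt.ext ?_ ?_ <;>
          simp [TrivSqZeroExt.snd_mul, TrivSqZeroExt.fst_mul, huv, hwdef, op_smul_eq_smul]
      have hzeq : (inl g : TrivSqZeroExt A K) = inl u * x + inl v * y - inr w := by
        rw [hsum]; ring
      rw [hzeq]
      exact sub_mem (Ideal.add_mem _
        (Ideal.mul_mem_left _ _ (Ideal.subset_span (by simp)))
        (Ideal.mul_mem_left _ _ (Ideal.subset_span (by simp)))) hinrw
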